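/- If G is a connected prime graph and u, v are two non-adjacent vertices of G, then the triangle-path convex hull of {u, v} equals V(G). -/

import Mathlib

open Set

variable {V : Type*}

/-- `p` is a triangle path: a path with no edge joining vertices at index
distance greater than 2 along the path. -/
def TPath (G : SimpleGraph V) {u v : V} (p : G.Walk u v) : Prop :=
  p.IsPath ∧ ∀ i j : ℕ, i + 2 < j →
    ∀ (hi : i < p.support.length) (hj : j < p.support.length),
      ¬ G.Adj (p.support.get ⟨i, hi⟩) (p.support.get ⟨j, hj⟩)

/-- `p` is a monophonic (induced) path: a path with no edge joining vertices at
index distance greater than 1 along the path. -/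
def MPath (G : SimpleGraph V) {u v : V} (p : G.Walk u v) : Prop :=
  p.IsPath ∧ ∀ i j : ℕ, i + 1 < j →
    ∀ (hi : i < p.support.length) (hj : j < p.support.length),
      ¬ G.Adj (p.support.get ⟨i, hi⟩) (p.support.get ⟨j, hj⟩)

/-- `p` is a geodesic (shortest path). -/
def GPath (G : SimpleGraph V) {u v : V} (p : G.Walk u v) : Prop :=
  p.IsPath ∧ ∀ q : G.Walk u v, p.length ≤ q.length

/-- `S` is convex in the triangle path convexity. -/
def TConvex (G : SimpleGraph V) (S : Set V) : Prop :=
  ∀ ⦃u v : V⦄, u ∈ S → v ∈ S → ∀ p : G.Walk u v, TPath G p → ∀ w ∈ p.support, w ∈ S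

/-- `S` is convex in the monophonic convexity. -/
def MConvex (G : SimpleGraph V) (S : Set V) : Prop :=
  ∀ ⦃u v : V⦄, u ∈ S → v ∈ S → ∀ p : G.Walk u v, MPath G p → ∀ w ∈ p.support, w ∈ S

/-- `S` is convex in the geodetic convexity. -/
def GConvex (G : SimpleGraph V) (S : Set V) : Prop :=
  ∀ ⦃u v : V⦄, u ∈ S → v ∈ S → ∀ p : G.Walk u v, GPath G p → ∀ w ∈ p.support, w ∈ S

/-- `S` is `P₃`-convex: no vertex outside `S` has two neighbours in `S`. -/
def P3Convex (G : SimpleGraph V) (S : Set V) : Prop :=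
  ∀ w ∉ S, ∀ a ∈ S, ∀ b ∈ S, G.Adj w a → G.Adj w b → a = b

/-- The triangle path interval of `S`. -/
def TInterval (G : SimpleGraph V) (S : Set V) : Set V :=
  S ∪ {w | ∃ u ∈ S, ∃ v ∈ S, ∃ p : G.Walk u v, TPath G p ∧ w ∈ p.support}

/-- The monophonic interval of `S`. -/
def MInterval (G : SimpleGraph V) (S : Set V) : Set V :=
  S ∪ {w | ∃ u ∈ S, ∃ v ∈ S, ∃ p : G.Walk u v, MPath G p ∧ w ∈ p.support}

/-- The geodetic interval of `S`. -/
def GInterval (G : SimpleGraph V) (S : Set V) : Set V :=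
  S ∪ {w | ∃ u ∈ S, ∃ v ∈ S, ∃ p : G.Walk u v, GPath G p ∧ w ∈ p.support}

/-- The `P₃`-interval of `S`: `S` together with the vertices having at least two
neighbours in `S`. -/
def P3Interval (G : SimpleGraph V) (S : Set V) : Set V :=
  S ∪ {w | w ∉ S ∧ ∃ a ∈ S, ∃ b ∈ S, a ≠ b ∧ G.Adj w a ∧ G.Adj w b}

/-- The convex hull of `S` in the triangle path convexity. -/
def THull (G : SimpleGraph V) (S : Set V) : Set V :=
  ⋂₀ {C : Set V | S ⊆ C ∧ TConvex G C}

/-- The convex hull of `S` in the monophonic convexity. -/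
def MHull (G : SimpleGraph V) (S : Set V) : Set V :=
  ⋂₀ {C : Set V | S ⊆ C ∧ MConvex G C}

/-- The convex hull of `S` in the geodetic convexity. -/
def GHull (G : SimpleGraph V) (S : Set V) : Set V :=
  ⋂₀ {C : Set V | S ⊆ C ∧ GConvex G C}

/-- `K` separates the vertices `a` and `b`: both lie outside `K` and every walk
between them meets `K`. -/
def Separates (G : SimpleGraph V) (K : Set V) (a b : V) : Prop :=
  a ∉ K ∧ b ∉ K ∧ ∀ p : G.Walk a b, ∃ w ∈ p.support, w ∈ K

/-- `K` is a separator of `G`. -/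
def IsSeparator (G : SimpleGraph V) (K : Set V) : Prop :=
  ∃ a b : V, Separates G K a b

/-- `G` is prime: it has no clique separator. -/
def IsPrime (G : SimpleGraph V) : Prop :=
  ¬ ∃ C : Set V, G.IsClique C ∧ IsSeparator G C

/-- `K` is a minimal separator for `a` and `b`. -/
def IsMinSeparator (G : SimpleGraph V) (K : Set V) (a b : V) : Prop :=
  Separates G K a b ∧ ∀ K' : Set V, K' ⊂ K → ¬ Separates G K' a b

/-- `W` induces a maximal prime subgraph of `G`. -/
def IsMPSubgraph (G : SimpleGraph V) (W : Set V) : Prop :=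
  IsPrime (G.induce W) ∧ ∀ W' : Set V, W ⊆ W' → IsPrime (G.induce W') → W' = W

/-- `C` is the vertex set of a connected component of `G - S`. -/
def IsCompOf (G : SimpleGraph V) (S C : Set V) : Prop :=
  C.Nonempty ∧ C ∩ S = ∅ ∧
  (∀ x ∈ C, ∀ y ∈ C, ∃ p : G.Walk x y, ∀ w ∈ p.support, w ∈ C) ∧
  (∀ x ∈ C, ∀ y : V, y ∉ S → G.Adj x y → y ∈ C)


lemma aux_support_get_eq_getVert {G : SimpleGraph V} {u v : V} (p : G.Walk u v) :
    ∀ i (hi : i < p.support.length), p.support.get ⟨i, hi⟩ = p.getVert i := by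
  induction p with
  | nil =>
    intro i hi
    simp only [SimpleGraph.Walk.support_nil, List.length_singleton] at hi
    interval_cases i
    rfl
  | cons h q ih =>
    intro i hi
    cases i with
    | zero => rfl
    | succ n =>
      simp only [SimpleGraph.Walk.support_cons, List.get_cons_succ,
        SimpleGraph.Walk.getVert_cons_succ]
      exact ih n (by simpa [SimpleGraph.Walk.support_cons] using Nat.lt_of_succ_lt_succ hi)

lemma aux_length_drop {G : SimpleGraph V} {u v : V} (p : G.Walk u v) (n : ℕ) :
    (p.drop n).length = p.length - n := by
  induction p generalizing n with
  | nil => cases n <;> simp [SimpleGraph.Walk.drop]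
  | cons h q ih =>
    cases n with
    | zero => simp [SimpleGraph.Walk.drop]
    | succ n => simp [SimpleGraph.Walk.drop, ih]

lemma aux_support_drop_subset {G : SimpleGraph V} {u v : V} (p : G.Walk u v) (n : ℕ) :
    (p.drop n).support ⊆ p.support := by
  induction p generalizing n with
  | nil => cases n <;> simp [SimpleGraph.Walk.drop, SimpleGraph.Walk.getVert_of_length_le]
  | cons h q ih =>
    cases n with
    | zero => simp [SimpleGraph.Walk.drop]
    | succ n =>
      simp only [SimpleGraph.Walk.drop, SimpleGraph.Walk.support_copy,
        SimpleGraph.Walk.support_cons]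
      exact fun w hw => List.mem_cons_of_mem _ (ih n hw)

lemma aux_exists_shorter {G : SimpleGraph V} {u v : V} (p : G.Walk u v) :
    ∀ {i j : ℕ}, i + 1 < j → j ≤ p.length → G.Adj (p.getVert i) (p.getVert j) →
      ∃ q : G.Walk u v, q.length < p.length ∧ q.support ⊆ p.support := by
  induction p with
  | nil => intro i j hij hj _; simp only [SimpleGraph.Walk.length_nil] at hj; omega
  | cons h r ih =>
    intro i j hij hj hadj
    cases i with
    | zero =>
      obtain ⟨j', rfl⟩ : ∃ j', j = j' + 1 := ⟨j - 1, by omega⟩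
      rw [SimpleGraph.Walk.getVert_zero, SimpleGraph.Walk.getVert_cons_succ] at hadj
      refine ⟨SimpleGraph.Walk.cons hadj (r.drop j'), ?_, ?_⟩
      · simp only [SimpleGraph.Walk.length_cons, aux_length_drop]
        simp only [SimpleGraph.Walk.length_cons] at hj
        omega
      · simp only [SimpleGraph.Walk.support_cons]
        exact fun w hw => by
          rcases List.mem_cons.mp hw with h1 | h2
          · exact h1 ▸ List.mem_cons_self
          · exact List.mem_cons_of_mem _ (aux_support_drop_subset r j' h2)
    | succ i' =>
      obtain ⟨j', rfl⟩ : ∃ j', j = j' + 1 := ⟨j - 1, by omega⟩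
      rw [SimpleGraph.Walk.getVert_cons_succ, SimpleGraph.Walk.getVert_cons_succ] at hadj
      obtain ⟨q, hq1, hq2⟩ := ih (by omega)
        (by simp only [SimpleGraph.Walk.length_cons] at hj; omega) hadj
      refine ⟨SimpleGraph.Walk.cons h q, by simpa using hq1, ?_⟩
      simp only [SimpleGraph.Walk.support_cons]
      exact fun w hw => by
        rcases List.mem_cons.mp hw with h1 | h2
        · exact h1 ▸ List.mem_cons_self
        · exact List.mem_cons_of_mem _ (hq2 h2)

theorem stmt_6 [Fintype V] (G : SimpleGraph V) (hconn : G.Connected)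
    (hprime : IsPrime G) (u v : V) (huv : u ≠ v) (hadj : ¬ G.Adj u v) :
    THull G {u, v} = Set.univ := by
  classical
  by_contra hne
  set H := THull G {u, v} with hH
  have hmem : ∀ x ∈ ({u, v} : Set V), x ∈ H :=
    fun x hx => Set.mem_sInter.2 fun C hC => hC.1 hx
  have hconv : TConvex G H := by
    intro a b ha hb p hp w hw
    exact Set.mem_sInter.2 fun C hC =>
      hC.2 (Set.mem_sInter.1 ha C hC) (Set.mem_sInter.1 hb C hC) p hp w hw
  obtain ⟨z, hz⟩ : ∃ z, z ∉ H := by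
    by_contra h
    push_neg at h
    exact hne (Set.eq_univ_of_forall h)
  set C : Set V := {x | ∃ p : G.Walk z x, ∀ w ∈ p.support, w ∉ H} with hC
  have hzC : z ∈ C := ⟨SimpleGraph.Walk.nil, by
    intro w hw
    simp only [SimpleGraph.Walk.support_nil, List.mem_singleton] at hw
    exact hw ▸ hz⟩
  have hCnotH : ∀ x ∈ C, x ∉ H := by
    rintro x ⟨p, hp⟩
    exact hp x p.end_mem_support
  have hCsupp : ∀ {x : V} (p : G.Walk z x), (∀ w ∈ p.support, w ∉ H) →
      ∀ w ∈ p.support, w ∈ C := by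
    intro x p hp w hw
    exact ⟨p.takeUntil w hw, fun a ha => hp a (p.support_takeUntil_subset hw ha)⟩
  have hCclosed : ∀ x ∈ C, ∀ y : V, y ∉ H → G.Adj x y → y ∈ C := by
    rintro x ⟨p, hp⟩ y hyH hxy
    refine ⟨p.concat hxy, ?_⟩
    intro w hw
    rw [SimpleGraph.Walk.support_concat, List.mem_append] at hw
    rcases hw with hw | hw
    · exact hp w hw
    · simp only [List.mem_singleton] at hw; exact hw ▸ hyH
  set K : Set V := {k | k ∈ H ∧ ∃ c ∈ C, G.Adj c k} with hK
  have hKclique : G.IsClique K := by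
    intro k1 hk1 k2 hk2 hne12
    obtain ⟨hk1H, c1, hc1C, hc1⟩ := hk1
    obtain ⟨hk2H, c2, hc2C, hc2⟩ := hk2
    by_contra hnadj
    obtain ⟨p1, hp1⟩ := hc1C
    obtain ⟨p2, hp2⟩ := hc2C
    have hc1C' : c1 ∈ C := ⟨p1, hp1⟩
    have hc2C' : c2 ∈ C := ⟨p2, hp2⟩
    have hW0 : ∃ q : G.Walk k1 k2, ∀ w ∈ q.support, w ≠ k1 → w ≠ k2 → w ∈ C := by
      refine ⟨SimpleGraph.Walk.cons hc1.symm ((p1.reverse.append p2).concat hc2), ?_⟩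
      intro w hw hwk1 hwk2
      rw [SimpleGraph.Walk.support_cons, List.mem_cons] at hw
      rcases hw with rfl | hw
      · exact absurd rfl hwk1
      rw [SimpleGraph.Walk.support_concat, List.mem_append] at hw
      rcases hw with hw | hw
      · rw [SimpleGraph.Walk.support_append, List.mem_append] at hw
        rcases hw with hw | hw
        · rw [SimpleGraph.Walk.support_reverse, List.mem_reverse] at hw
          exact hCsupp p1 hp1 w hw
        · exact hCsupp p2 hp2 w (List.mem_of_mem_tail hw)
      · simp only [List.mem_singleton] at hw; exact absurd hw hwk2
    obtain ⟨q0, hq0⟩ := hW0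
    have hP : ∃ n, ∃ q : G.Walk k1 k2, q.length = n ∧
        ∀ w ∈ q.support, w ≠ k1 → w ≠ k2 → w ∈ C := ⟨q0.length, q0, rfl, hq0⟩
    obtain ⟨q, hqlen, hqC⟩ := Nat.find_spec hP
    have hmin : ∀ q' : G.Walk k1 k2,
        (∀ w ∈ q'.support, w ≠ k1 → w ≠ k2 → w ∈ C) → q.length ≤ q'.length := by
      intro q' hq'
      rw [hqlen]
      exact Nat.find_min' hP ⟨q', rfl, hq'⟩
    have hqpath : q.IsPath := by
      have hby : q.bypass = q := by
        apply q.bypass_eq_self_of_length_le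
        exact hmin q.bypass fun w hw => hqC w (q.support_bypass_subset hw)
      rw [← hby]; exact q.bypass_isPath
    have hqT : TPath G q := by
      refine ⟨hqpath, ?_⟩
      intro i j hij hi hj hA
      rw [aux_support_get_eq_getVert q i hi, aux_support_get_eq_getVert q j hj] at hA
      have hjl : j ≤ q.length := by
        rw [SimpleGraph.Walk.length_support] at hj; omega
      obtain ⟨q', hlt, hsub⟩ := aux_exists_shorter q (by omega) hjl hA
      exact absurd (hmin q' fun w hw => hqC w (hsub hw)) (by omega)
    clear hqlen hmin hqpath
    cases q with
    | nil => exact hne12 rfl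
    | @cons _ b _ hq r =>
      have hbk1 : b ≠ k1 := hq.ne'
      have hbk2 : b ≠ k2 := by rintro rfl; exact hnadj hq
      have hbsupp : b ∈ (SimpleGraph.Walk.cons hq r).support := by
        rw [SimpleGraph.Walk.support_cons]
        exact List.mem_cons_of_mem _ r.start_mem_support
      have hbC : b ∈ C := hqC b hbsupp hbk1 hbk2
      exact hCnotH b hbC (hconv hk1H hk2H _ hqT b hbsupp)
  have hKuv : u ∉ K ∨ v ∉ K := by
    by_contra h
    push_neg at h
    exact hadj (hKclique h.1 h.2 huv)
  obtain ⟨a, haH, haK⟩ : ∃ a, a ∈ H ∧ a ∉ K := by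
    rcases hKuv with h | h
    · exact ⟨u, hmem u (Or.inl rfl), h⟩
    · exact ⟨v, hmem v (Or.inr rfl), h⟩
  have cross : ∀ (x y : V) (p : G.Walk x y), x ∈ C → y ∉ C → ∃ w ∈ p.support, w ∈ K := by
    intro x y p
    induction p with
    | nil => intro hx hy; exact absurd hx hy
    | @cons x b y h r ih =>
      intro hx hy
      by_cases hb : b ∈ C
      · obtain ⟨w, hw, hwK⟩ := ih hb hy
        exact ⟨w, by
          rw [SimpleGraph.Walk.support_cons]
          exact List.mem_cons_of_mem _ hw, hwK⟩
      · have hbH : b ∈ H := by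
          by_contra hbH
          exact hb (hCclosed x hx b hbH h)
        refine ⟨b, ?_, hbH, x, hx, h⟩
        rw [SimpleGraph.Walk.support_cons]
        exact List.mem_cons_of_mem _ r.start_mem_support
  refine hprime ⟨K, hKclique, z, a, fun h => hz h.1, fun h => haK h, ?_⟩
  intro p
  exact cross z a p hzC (fun h => hCnotH a h haH)
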